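/- Let S be a nonempty finite set, T a finite family of 0-1 valued functions on S, and let R* be any binary relation on S minimizing ∑_{i∈T} d_Δ(R, R(f_i)) over all relations R. Then for each pair (a,b) ∈ S × S: if strictly more than half the f_i satisfy f_i(a) = f_i(b) then (a,b) ∈ R*, and if strictly fewer than half do then (a,b) ∉ R*. -/

import Mathlib

-- toggling a point in/out of R changes the symmetric difference by exactly one point
private lemma symmDiff_insert_mem {α : Type*} {R A : Set α} {p : α}
    (hp : p ∉ R) (hpA : p ∈ A) : (symmDiff (insert p R) A) = (symmDiff R A) \ {p} := by
  ext q
  by_cases hq : q = p <;>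
    simp [Set.mem_symmDiff, Set.mem_insert_iff, hq, hp, hpA]

private lemma symmDiff_insert_not_mem {α : Type*} {R A : Set α} {p : α}
    (hp : p ∉ R) (hpA : p ∉ A) : (symmDiff (insert p R) A) = insert p (symmDiff R A) := by
  ext q
  by_cases hq : q = p <;>
    simp [Set.mem_symmDiff, Set.mem_insert_iff, hq, hp, hpA]

private lemma symmDiff_diff_mem {α : Type*} {R A : Set α} {p : α}
    (hp : p ∈ R) (hpA : p ∈ A) : (symmDiff (R \ {p}) A) = insert p (symmDiff R A) := by
  ext q
  by_cases hq : q = p <;>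
    simp [Set.mem_symmDiff, Set.mem_insert_iff, hq, hp, hpA]

private lemma symmDiff_diff_not_mem {α : Type*} {R A : Set α} {p : α}
    (hp : p ∈ R) (hpA : p ∉ A) : (symmDiff (R \ {p}) A) = (symmDiff R A) \ {p} := by
  ext q
  by_cases hq : q = p <;>
    simp [Set.mem_symmDiff, Set.mem_insert_iff, hq, hp, hpA]

theorem stmt7 {S ι : Type*} [Fintype S] [Nonempty S] [DecidableEq ι]
    (T : Finset ι) (f : ι → S → Fin 2)
    (Rf : ι → Set (S × S)) (hRf : ∀ i, Rf i = {p | f i p.1 = f i p.2})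
    (d : Set (S × S) → Set (S × S) → ℕ) (hd : ∀ A B, d A B = (symmDiff A B).ncard)
    (Rstar : Set (S × S))
    (hmin : ∀ R : Set (S × S), ∑ i ∈ T, d Rstar (Rf i) ≤ ∑ i ∈ T, d R (Rf i)) :
    ∀ a b : S,
      (2 * (T.filter fun i => f i a = f i b).card > T.card → (a, b) ∈ Rstar) ∧
      (2 * (T.filter fun i => f i a = f i b).card < T.card → (a, b) ∉ Rstar) := by
  intro a b
  set p : S × S := (a, b) with hpdef
  have hmemRf : ∀ i, f i a = f i b ↔ p ∈ Rf i := by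
    intro i; rw [hRf i]; simp [hpdef]
  have hcard := Finset.card_filter_add_card_filter_not
    (s := T) (p := fun i => f i a = f i b)
  constructor
  · intro hgt
    by_contra hp
    set R' := insert p Rstar with hR'
    have h1 : ∀ i ∈ T.filter (fun i => f i a = f i b),
        d Rstar (Rf i) = d R' (Rf i) + 1 := by
      intro i hi
      have hiA : p ∈ Rf i := (hmemRf i).1 (Finset.mem_filter.1 hi).2
      rw [hd, hd, symmDiff_insert_mem hp hiA]
      exact (Set.ncard_diff_singleton_add_one
        (by simp [Set.mem_symmDiff, hp, hiA]) (Set.toFinite _)).symm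
    have h2 : ∀ i ∈ T.filter (fun i => ¬ f i a = f i b),
        d R' (Rf i) = d Rstar (Rf i) + 1 := by
      intro i hi
      have hiA : p ∉ Rf i := fun h => (Finset.mem_filter.1 hi).2 ((hmemRf i).2 h)
      rw [hd, hd, symmDiff_insert_not_mem hp hiA]
      exact Set.ncard_insert_of_notMem
        (by simp [Set.mem_symmDiff, hp, hiA]) (Set.toFinite _)
    have e1 : ∑ i ∈ T.filter (fun i => f i a = f i b), d Rstar (Rf i)
        = (∑ i ∈ T.filter (fun i => f i a = f i b), d R' (Rf i))
          + (T.filter fun i => f i a = f i b).card := by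
      rw [Finset.sum_congr rfl h1, Finset.sum_add_distrib, Finset.sum_const, smul_eq_mul,
        mul_one]
    have e2 : ∑ i ∈ T.filter (fun i => ¬ f i a = f i b), d R' (Rf i)
        = (∑ i ∈ T.filter (fun i => ¬ f i a = f i b), d Rstar (Rf i))
          + (T.filter fun i => ¬ f i a = f i b).card := by
      rw [Finset.sum_congr rfl h2, Finset.sum_add_distrib, Finset.sum_const, smul_eq_mul,
        mul_one]
    have e3 := Finset.sum_filter_add_sum_filter_not T (fun i => f i a = f i b)
      (fun i => d Rstar (Rf i))
    have e4 := Finset.sum_filter_add_sum_filter_not T (fun i => f i a = f i b)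
      (fun i => d R' (Rf i))
    have hm := hmin R'
    omega
  · intro hlt hp
    -- hp : p ∈ Rstar
    set R' := Rstar \ {p} with hR'
    have h1 : ∀ i ∈ T.filter (fun i => f i a = f i b),
        d R' (Rf i) = d Rstar (Rf i) + 1 := by
      intro i hi
      have hiA : p ∈ Rf i := (hmemRf i).1 (Finset.mem_filter.1 hi).2
      rw [hd, hd, symmDiff_diff_mem hp hiA]
      exact Set.ncard_insert_of_notMem
        (by simp [Set.mem_symmDiff, hp, hiA]) (Set.toFinite _)
    have h2 : ∀ i ∈ T.filter (fun i => ¬ f i a = f i b),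
        d Rstar (Rf i) = d R' (Rf i) + 1 := by
      intro i hi
      have hiA : p ∉ Rf i := fun h => (Finset.mem_filter.1 hi).2 ((hmemRf i).2 h)
      rw [hd, hd, symmDiff_diff_not_mem hp hiA]
      exact (Set.ncard_diff_singleton_add_one
        (by simp [Set.mem_symmDiff, hp, hiA]) (Set.toFinite _)).symm
    have e1 : ∑ i ∈ T.filter (fun i => f i a = f i b), d R' (Rf i)
        = (∑ i ∈ T.filter (fun i => f i a = f i b), d Rstar (Rf i))
          + (T.filter fun i => f i a = f i b).card := by
      rw [Finset.sum_congr rfl h1, Finset.sum_add_distrib, Finset.sum_const, smul_eq_mul,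
        mul_one]
    have e2 : ∑ i ∈ T.filter (fun i => ¬ f i a = f i b), d Rstar (Rf i)
        = (∑ i ∈ T.filter (fun i => ¬ f i a = f i b), d R' (Rf i))
          + (T.filter fun i => ¬ f i a = f i b).card := by
      rw [Finset.sum_congr rfl h2, Finset.sum_add_distrib, Finset.sum_const, smul_eq_mul,
        mul_one]
    have e3 := Finset.sum_filter_add_sum_filter_not T (fun i => f i a = f i b)
      (fun i => d Rstar (Rf i))
    have e4 := Finset.sum_filter_add_sum_filter_not T (fun i => f i a = f i b)
      (fun i => d R' (Rf i))
    have hm := hmin R'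
    omega
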